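/- The monomial symmetric function basis is triangular for D: for every partition n, D·M_n = ∑_{m ≤ n} b_{n,m} M_m for some coefficients b_{n,m}, where M_m(z) = ∑_{P ∈ S_N} ∏_j z_j^{m_{Pj}} and m ≤ n is the dominance order (equal total degree, partial sums of m bounded by those of n). -/

import Mathlib

open Finset Function

namespace CS11

noncomputable def Mf {N : ℕ} (m : Fin N → ℕ) : (Fin N → ℂ) → ℂ :=
  fun w => ∑ σ : Equiv.Perm (Fin N), ∏ j : Fin N, w j ^ (m (σ j))

noncomputable def pdf {N : ℕ} (g : (Fin N → ℂ) → ℂ) (j : Fin N) (w : Fin N → ℂ) : ℂ :=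
  deriv (fun s => g (Function.update w j s)) (w j)

/-- the permutation sorting `e` into decreasing order -/
def prm {N : ℕ} (e : Fin N → ℕ) : Equiv.Perm (Fin N) := (Tuple.sort e) * Fin.revPerm

/-- decreasing rearrangement -/
def srt {N : ℕ} (e : Fin N → ℕ) : Fin N → ℕ := fun j => e (prm e j)

lemma srt_antitone {N : ℕ} (e : Fin N → ℕ) (j k : Fin N) (hjk : j ≤ k) :
    srt e k ≤ srt e j := by
  have := Tuple.monotone_sort e (show Fin.rev k ≤ Fin.rev j from Fin.rev_le_rev.mpr hjk)
  simpa [srt, prm] using this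

lemma part_sum {N : ℕ} (n : Fin N → ℕ) (hn : ∀ j k : Fin N, j ≤ k → n k ≤ n j)
    (S : Finset (Fin N)) :
    ∑ k ∈ S, n k ≤ ∑ k ∈ univ.filter (fun k : Fin N => (k : ℕ) < S.card), n k := by
  induction S using Finset.strongInduction with
  | _ S IH =>
    rcases S.eq_empty_or_nonempty with rfl | hS
    · simp
    · have haS : S.max' hS ∈ S := S.max'_mem hS
      set a := S.max' hS with ha
      have hcard : (S.erase a).card = S.card - 1 := Finset.card_erase_of_mem haS
      have IH' := IH _ (Finset.erase_ssubset haS)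
      rw [hcard] at IH'
      have hub : S.card ≤ (a : ℕ) + 1 := by
        have hsub : S ⊆ Finset.Iic a := fun x hx => Finset.mem_Iic.mpr (S.le_max' x hx)
        have := Finset.card_le_card hsub
        rwa [Fin.card_Iic] at this
      have hSN : S.card ≤ N := by
        have := Finset.card_le_univ S
        simpa using this
      have hpos : 1 ≤ S.card := Finset.card_pos.mpr hS
      set j0 : Fin N := ⟨S.card - 1, by omega⟩ with hj0
      have hj0a : j0 ≤ a := by
        rw [Fin.le_def]; simp only [hj0]; omega
      have hfilter : univ.filter (fun k : Fin N => (k : ℕ) < S.card)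
          = insert j0 (univ.filter (fun k : Fin N => (k : ℕ) < S.card - 1)) := by
        ext k
        simp only [mem_filter, mem_univ, true_and, mem_insert, Fin.ext_iff, hj0]
        omega
      have hj0no : j0 ∉ univ.filter (fun k : Fin N => (k : ℕ) < S.card - 1) := by
        simp [hj0]
      rw [hfilter, Finset.sum_insert hj0no]
      rw [← Finset.add_sum_erase S n haS]
      exact add_le_add (hn j0 a hj0a) IH'

noncomputable def kap (a b t : ℕ) : ℂ :=
  (if t = 0 then ((max a b : ℕ) : ℂ) else 0)
    + (if t = max a b - min a b then ((max a b : ℕ) : ℂ) else 0)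
    + (if 0 < t ∧ t < max a b - min a b then ((max a b - min a b : ℕ) : ℂ) else 0)

lemma kap_comm (a b t : ℕ) : kap a b t = kap b a t := by
  simp [kap, Nat.max_comm, Nat.min_comm]

lemma key (d b : ℕ) (x y : ℂ) :
    (x - y) * ∑ t ∈ range (d+1),
      (((if t = 0 then ((b+d : ℕ) : ℂ) else 0) + (if t = d then ((b+d : ℕ) : ℂ) else 0)
        + (if 0 < t ∧ t < d then (d : ℂ) else 0)) * (x ^ t * y ^ (d - t)))
    = ((b+d : ℕ) : ℂ) * x ^ (d+1) - (b : ℂ) * (x ^ d * y) + (b : ℂ) * (x * y ^ d)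
        - ((b+d : ℕ) : ℂ) * y ^ (d+1) := by
  simp only [add_mul, sum_add_distrib, ite_mul, zero_mul]
  rw [Finset.sum_ite_eq' (range (d+1)) 0, Finset.sum_ite_eq' (range (d+1)) d]
  simp only [mem_range, Nat.lt_succ_iff, Nat.zero_le, le_refl, if_true, if_pos]
  rcases Nat.eq_zero_or_pos d with rfl | hd
  · simp; push_cast; ring
  · obtain ⟨d', rfl⟩ : ∃ d', d = d' + 1 := ⟨d - 1, by omega⟩
    have h3 : ∑ t ∈ range (d'+1+1), (if 0 < t ∧ t < d'+1 then ((d'+1 : ℕ) : ℂ)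
          * (x ^ t * y ^ (d'+1-t)) else 0)
        = ((d'+1 : ℕ) : ℂ) * (x*y) * ∑ i ∈ range d', x ^ i * y ^ (d' - 1 - i) := by
      rw [← Finset.sum_filter]
      have himg : (range (d'+1+1)).filter (fun t => 0 < t ∧ t < d'+1)
          = (range d').image (· + 1) := by
        ext t
        simp only [mem_filter, mem_range, mem_image]
        constructor
        · rintro ⟨h1, h2, h3⟩; exact ⟨t - 1, by omega, by omega⟩
        · rintro ⟨s, hs, rfl⟩; omega
      rw [himg, Finset.sum_image (by intros a _ b _ h; simpa using h)]
      rw [Finset.mul_sum]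
      refine Finset.sum_congr rfl fun s hs => ?_
      rw [mem_range] at hs
      rw [show d' + 1 - (s+1) = (d' - 1 - s) + 1 by omega, pow_succ, pow_succ]
      ring
    rw [h3]
    have hg := geom_sum₂_mul x y d'
    simp only [pow_zero, Nat.sub_self, Nat.sub_zero, one_mul, mul_one]
    push_cast
    linear_combination ((d' : ℂ) + 1) * x * y * hg


lemma identle (b d : ℕ) (x y : ℂ) (hxy : x ≠ y) :
    ((b+d : ℕ) : ℂ) * x ^ (b+d+1) * y ^ b / (x - y) + (b : ℂ) * y ^ (b+1) * x ^ (b+d) / (y - x)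
      + (b : ℂ) * x ^ (b+1) * y ^ (b+d) / (x - y) + ((b+d : ℕ) : ℂ) * y ^ (b+d+1) * x ^ b / (y - x)
    = ∑ t ∈ range (d + 1), kap (b+d) b t * (x ^ (b + t) * y ^ (b + d - t)) := by
  have hsub : x - y ≠ 0 := sub_ne_zero.mpr hxy
  have hS : ∑ t ∈ range (d + 1), kap (b+d) b t * (x ^ (b + t) * y ^ (b + d - t))
      = x ^ b * y ^ b * ∑ t ∈ range (d+1),
        (((if t = 0 then ((b+d : ℕ) : ℂ) else 0) + (if t = d then ((b+d : ℕ) : ℂ) else 0)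
          + (if 0 < t ∧ t < d then (d : ℂ) else 0)) * (x ^ t * y ^ (d - t))) := by
    rw [Finset.mul_sum]
    refine Finset.sum_congr rfl fun t ht => ?_
    rw [mem_range, Nat.lt_succ_iff] at ht
    have hmax : max (b+d) b = b + d := max_eq_left (Nat.le_add_right b d)
    have hmin : min (b+d) b = b := min_eq_right (Nat.le_add_right b d)
    have hdd : b + d - b = d := by omega
    simp only [kap, hmax, hmin, hdd]
    rw [show b + t = b + t from rfl, pow_add x b t, show b + d - t = b + (d - t) by omega,
      pow_add y b (d - t)]
    push_cast
    ring
  rw [hS]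
  have h1 : ∀ c : ℂ, c / (y - x) = -c / (x - y) := fun c => by
    rw [show y - x = -(x - y) by ring, div_neg, neg_div]
  rw [h1, h1, ← add_div, ← add_div, ← add_div, div_eq_iff hsub]
  have hk := key d b x y
  rw [show x ^ b * y ^ b * (∑ t ∈ range (d+1),
      (((if t = 0 then ((b+d : ℕ) : ℂ) else 0) + (if t = d then ((b+d : ℕ) : ℂ) else 0)
        + (if 0 < t ∧ t < d then (d : ℂ) else 0)) * (x ^ t * y ^ (d - t)))) * (x - y)
    = x ^ b * y ^ b * ((x - y) * ∑ t ∈ range (d+1),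
      (((if t = 0 then ((b+d : ℕ) : ℂ) else 0) + (if t = d then ((b+d : ℕ) : ℂ) else 0)
        + (if 0 < t ∧ t < d then (d : ℂ) else 0)) * (x ^ t * y ^ (d - t)))) by ring, hk]
  push_cast
  ring

lemma ident (a b : ℕ) (x y : ℂ) (hxy : x ≠ y) :
    (a : ℂ) * x ^ (a+1) * y ^ b / (x - y) + (b : ℂ) * y ^ (b+1) * x ^ a / (y - x)
      + (b : ℂ) * x ^ (b+1) * y ^ a / (x - y) + (a : ℂ) * y ^ (a+1) * x ^ b / (y - x)
    = ∑ t ∈ range (max a b - min a b + 1),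
        kap a b t * (x ^ (min a b + t) * y ^ (max a b - t)) := by
  rcases le_total b a with h | h
  · obtain ⟨d, rfl⟩ : ∃ d, a = b + d := ⟨a - b, by omega⟩
    have hmax : max (b+d) b = b + d := max_eq_left (Nat.le_add_right b d)
    have hmin : min (b+d) b = b := min_eq_right (Nat.le_add_right b d)
    rw [hmax, hmin, show b + d - b = d by omega]
    have := identle b d x y hxy
    push_cast at this ⊢
    exact this
  · obtain ⟨d, rfl⟩ : ∃ d, b = a + d := ⟨b - a, by omega⟩
    have hmax : max a (a+d) = a + d := max_eq_right (Nat.le_add_right a d)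
    have hmin : min a (a+d) = a := min_eq_left (Nat.le_add_right a d)
    rw [hmax, hmin, show a + d - a = d by omega]
    have H := identle a d x y hxy
    calc (a : ℂ) * x ^ (a+1) * y ^ (a+d) / (x - y) + ((a+d : ℕ) : ℂ) * y ^ (a+d+1) * x ^ a / (y - x)
          + ((a+d : ℕ) : ℂ) * x ^ (a+d+1) * y ^ a / (x - y) + (a : ℂ) * y ^ (a+1) * x ^ (a+d) / (y - x)
        = ∑ t ∈ range (d + 1), kap (a+d) a t * (x ^ (a + t) * y ^ (a + d - t)) := by
          rw [← H]; push_cast; ring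
      _ = ∑ t ∈ range (d + 1), kap a (a+d) t * (x ^ (a + t) * y ^ (a + d - t)) := by
          refine Finset.sum_congr rfl fun t _ => ?_; rw [kap_comm]
    done


lemma update_prod {N : ℕ} (e : Fin N → ℕ) (w : Fin N → ℂ) (j : Fin N) (s : ℂ) :
    ∏ l, (Function.update w j s l) ^ e l = s ^ e j * ∏ l ∈ univ.erase j, w l ^ e l := by
  rw [← Finset.mul_prod_erase univ _ (mem_univ j), Function.update_self]
  congr 1
  refine Finset.prod_congr rfl fun l hl => ?_
  rw [Function.update_of_ne (Finset.ne_of_mem_erase hl)]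

lemma pd_M {N : ℕ} (n : Fin N → ℕ) (j : Fin N) (w : Fin N → ℂ) :
    pdf (Mf n) j w = ∑ σ : Equiv.Perm (Fin N),
      (n (σ j) : ℂ) * w j ^ (n (σ j) - 1) * ∏ l ∈ univ.erase j, w l ^ n (σ l) := by
  unfold pdf Mf
  have h1 : (fun s => ∑ σ : Equiv.Perm (Fin N), ∏ l, (Function.update w j s l) ^ n (σ l))
      = fun s => ∑ σ : Equiv.Perm (Fin N), s ^ n (σ j) * ∏ l ∈ univ.erase j, w l ^ n (σ l) := by
    funext s
    exact Finset.sum_congr rfl fun σ _ => update_prod _ _ _ _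
  rw [h1, deriv_fun_sum (fun σ _ => (differentiable_pow _).differentiableAt.mul_const _)]
  exact Finset.sum_congr rfl fun σ _ => by
    rw [deriv_mul_const (differentiable_pow _).differentiableAt, deriv_pow_field]

lemma pd_pd_M {N : ℕ} (n : Fin N → ℕ) (j : Fin N) (w : Fin N → ℂ) :
    pdf (pdf (Mf n) j) j w = ∑ σ : Equiv.Perm (Fin N),
      (n (σ j) : ℂ) * ((n (σ j) - 1 : ℕ) : ℂ) * w j ^ (n (σ j) - 1 - 1)
        * ∏ l ∈ univ.erase j, w l ^ n (σ l) := by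
  have hfun : pdf (Mf n) j = fun w => ∑ σ : Equiv.Perm (Fin N),
      (n (σ j) : ℂ) * w j ^ (n (σ j) - 1) * ∏ l ∈ univ.erase j, w l ^ n (σ l) :=
    funext (pd_M n j)
  rw [hfun]
  unfold pdf
  have h1 : (fun s => ∑ σ : Equiv.Perm (Fin N),
        (n (σ j) : ℂ) * (Function.update w j s j) ^ (n (σ j) - 1)
          * ∏ l ∈ univ.erase j, (Function.update w j s l) ^ n (σ l))
      = fun s => ∑ σ : Equiv.Perm (Fin N),
        ((n (σ j) : ℂ) * s ^ (n (σ j) - 1)) * ∏ l ∈ univ.erase j, w l ^ n (σ l) := by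
    funext s
    refine Finset.sum_congr rfl fun σ _ => ?_
    have hprod : ∏ l ∈ univ.erase j, (Function.update w j s l) ^ n (σ l)
        = ∏ l ∈ univ.erase j, w l ^ n (σ l) :=
      Finset.prod_congr rfl fun l hl => by
        rw [Function.update_of_ne (Finset.ne_of_mem_erase hl)]
    rw [Function.update_self, hprod]
  rw [h1, deriv_fun_sum (fun σ _ =>
    ((differentiable_const _).mul (differentiable_pow _)).differentiableAt.mul_const _)]
  refine Finset.sum_congr rfl fun σ _ => ?_
  rw [deriv_mul_const (((differentiable_const _).mul (differentiable_pow _)).differentiableAt),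
    deriv_const_mul _ (differentiable_pow _).differentiableAt, deriv_pow_field]
  ring


lemma ml1 (p : ℕ) (x C : ℂ) :
    x ^ 2 * ((p : ℂ) * ((p - 1 : ℕ) : ℂ) * x ^ (p - 1 - 1) * C)
      = (p : ℂ) * ((p - 1 : ℕ) : ℂ) * (x ^ p * C) := by
  match p with
  | 0 => simp
  | 1 => simp
  | (q+2) =>
    simp only [Nat.add_sub_cancel, show q + 2 - 1 = q + 1 from rfl, show q + 1 - 1 = q from rfl]
    push_cast
    ring

lemma part1 {N : ℕ} (n : Fin N → ℕ) (z : Fin N → ℂ) :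
    ∑ j, z j ^ 2 * pdf (pdf (Mf n) j) j z
      = ∑ σ : Equiv.Perm (Fin N),
          (∑ j, (n (σ j) : ℂ) * ((n (σ j) - 1 : ℕ) : ℂ)) * ∏ l, z l ^ n (σ l) := by
  have step1 : ∀ j, z j ^ 2 * pdf (pdf (Mf n) j) j z
      = ∑ σ : Equiv.Perm (Fin N),
          (n (σ j) : ℂ) * ((n (σ j) - 1 : ℕ) : ℂ) * ∏ l, z l ^ n (σ l) := by
    intro j
    rw [pd_pd_M, Finset.mul_sum]
    refine Finset.sum_congr rfl fun σ _ => ?_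
    rw [← Finset.mul_prod_erase univ (fun l => z l ^ n (σ l)) (mem_univ j)]
    exact ml1 (n (σ j)) (z j) _
  rw [Finset.sum_congr rfl fun j _ => step1 j, Finset.sum_comm]
  exact Finset.sum_congr rfl fun σ _ => by rw [Finset.sum_mul]

lemma SYM {N : ℕ} (n : Fin N → ℕ)
    (ι : Type) [Fintype ι] (c : ι → ℂ) (E : ι → Fin N → ℕ)
    (hdeg : ∀ i, ∑ j, E i j = ∑ j, n j)
    (hdom : ∀ i (S : Finset (Fin N)),
      ∑ k ∈ S, E i k ≤ ∑ k ∈ univ.filter (fun k : Fin N => (k : ℕ) < S.card), n k)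
    (hsymE : ∀ τ : Equiv.Perm (Fin N), ∃ Φ : ι ≃ ι,
      ∀ i, c (Φ i) = c i ∧ E (Φ i) = fun l => E i (τ l))
    (f : (Fin N → ℂ) → ℂ)
    (hf : ∀ z : Fin N → ℂ, Function.Injective z → f z = ∑ i, c i * ∏ l, z l ^ E i l) :
    ∃ b : (Fin N → ℕ) → ℂ,
      (Function.support b).Finite ∧
      (∀ m, b m ≠ 0 → (∀ j k : Fin N, j ≤ k → m k ≤ m j) ∧ (∑ j, m j = ∑ j, n j) ∧
        (∀ j : Fin N, (∑ k ∈ univ.filter (fun k => k ≤ j), m k)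
            ≤ ∑ k ∈ univ.filter (fun k => k ≤ j), n k)) ∧
      ∀ z : Fin N → ℂ, Function.Injective z → f z = ∑ᶠ m, b m * Mf m z := by
  classical
  set T : Finset (Fin N → ℕ) := univ.image (fun i => srt (E i)) with hT
  set b : (Fin N → ℕ) → ℂ := fun m =>
    ((N.factorial : ℂ))⁻¹ * ∑ i ∈ univ.filter (fun i => srt (E i) = m), c i with hb
  have hbsupp : Function.support b ⊆ ↑T := by
    intro m hm
    rcases Finset.eq_empty_or_nonempty (univ.filter (fun i => srt (E i) = m)) with he | he
    · exfalso; apply hm; rw [hb]; simp only [he, Finset.sum_empty, mul_zero]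
    · obtain ⟨i, hi⟩ := he
      rw [mem_filter] at hi
      exact Finset.mem_coe.mpr (Finset.mem_image.mpr ⟨i, mem_univ i, hi.2⟩)
  have hNfac : (N.factorial : ℂ) ≠ 0 := Nat.cast_ne_zero.mpr (Nat.factorial_ne_zero N)
  refine ⟨b, Set.Finite.subset (Finset.finite_toSet T) hbsupp, ?_, ?_⟩
  · intro m hm
    have hmem : m ∈ T := hbsupp hm
    rw [hT, Finset.mem_image] at hmem
    obtain ⟨i, -, hi⟩ := hmem
    subst hi
    refine ⟨srt_antitone (E i), ?_, ?_⟩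
    · rw [show ∑ j, srt (E i) j = ∑ j, E i ((prm (E i)) j) from rfl,
        Equiv.sum_comp (prm (E i)) (E i)]
      exact hdeg i
    · intro j
      have hcard : (univ.filter (fun k : Fin N => k ≤ j)).card = (j : ℕ) + 1 := by
        rw [show univ.filter (fun k : Fin N => k ≤ j) = Finset.Iic j by ext k; simp]
        exact Fin.card_Iic j
      have hinj : ∀ x ∈ univ.filter (fun k : Fin N => k ≤ j),
          ∀ y ∈ univ.filter (fun k : Fin N => k ≤ j), prm (E i) x = prm (E i) y → x = y :=
        fun x _ y _ h => (prm (E i)).injective h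
      have h1 : ∑ k ∈ univ.filter (fun k : Fin N => k ≤ j), srt (E i) k
          = ∑ k ∈ (univ.filter (fun k : Fin N => k ≤ j)).image (prm (E i)), E i k := by
        rw [Finset.sum_image hinj]
        rfl
      have h2 := hdom i ((univ.filter (fun k : Fin N => k ≤ j)).image (prm (E i)))
      rw [Finset.card_image_of_injective _ (prm (E i)).injective, hcard] at h2
      rw [h1]
      refine h2.trans (le_of_eq ?_)
      congr 1
      ext k
      simp only [mem_filter, mem_univ, true_and]
      rw [Fin.le_def]
      omega
  · intro z hz
    have hsym : ∀ w : Fin N → ℂ, Function.Injective w → ∀ τ : Equiv.Perm (Fin N),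
        f (w ∘ τ) = f w := by
      intro w hw τ
      rw [hf _ (hw.comp τ.injective), hf w hw]
      obtain ⟨Φ, hΦ⟩ := hsymE τ⁻¹
      rw [← Equiv.sum_comp Φ (fun i => c i * ∏ l, w l ^ E i l)]
      refine Finset.sum_congr rfl fun i _ => ?_
      rw [(hΦ i).1, (hΦ i).2]
      congr 1
      rw [← Equiv.prod_comp τ (fun l => w l ^ E i (τ⁻¹ l))]
      refine Finset.prod_congr rfl fun l _ => ?_
      simp
    have hfz : ∀ τ : Equiv.Perm (Fin N), ∑ i, c i * ∏ l, z l ^ E i (τ l) = f z := by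
      intro τ
      have hinj : Function.Injective (z ∘ ⇑τ⁻¹) := hz.comp (Equiv.injective _)
      have h1 : ∑ i, c i * ∏ l, z l ^ E i (τ l) = f (z ∘ ⇑τ⁻¹) := by
        rw [hf _ hinj]
        refine Finset.sum_congr rfl fun i _ => ?_
        congr 1
        rw [← Equiv.prod_comp τ (fun l => (z ∘ ⇑τ⁻¹) l ^ E i l)]
        refine Finset.prod_congr rfl fun l _ => ?_
        simp
      rw [h1, hsym z hz τ⁻¹]
    have hMsrt : ∀ i, Mf (srt (E i)) z = ∑ τ : Equiv.Perm (Fin N), ∏ l, z l ^ E i (τ l) := by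
      intro i
      unfold Mf
      rw [← Equiv.sum_comp (Equiv.mulLeft (prm (E i)))
        (fun τ : Equiv.Perm (Fin N) => ∏ l, z l ^ E i (τ l))]
      refine Finset.sum_congr rfl fun τ _ => ?_
      refine Finset.prod_congr rfl fun l _ => ?_
      rfl
    have hchain : ∑ᶠ m, b m * Mf m z = f z := by
      have hsupp2 : Function.support (fun m => b m * Mf m z) ⊆ ↑T := by
        intro m hm
        apply hbsupp
        simp only [Function.mem_support] at hm ⊢
        intro hbm
        exact hm (by rw [hbm, zero_mul])
      rw [finsum_eq_sum_of_support_subset _ hsupp2]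
      have e1 : ∑ m ∈ T, b m * Mf m z
          = (N.factorial : ℂ)⁻¹ * ∑ m ∈ T, ∑ i ∈ univ.filter (fun i => srt (E i) = m),
              c i * Mf (srt (E i)) z := by
        rw [Finset.mul_sum]
        refine Finset.sum_congr rfl fun m hm => ?_
        rw [hb]
        rw [mul_assoc, Finset.sum_mul]
        congr 1
        refine Finset.sum_congr rfl fun i hi => ?_
        rw [mem_filter] at hi
        rw [hi.2]
      rw [e1, Finset.sum_fiberwise_of_maps_to
        (fun i _ => Finset.mem_image.mpr ⟨i, mem_univ i, rfl⟩)
        (fun i => c i * Mf (srt (E i)) z)]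
      have e2 : ∑ i, c i * Mf (srt (E i)) z = (N.factorial : ℂ) * f z := by
        calc ∑ i, c i * Mf (srt (E i)) z
            = ∑ i, ∑ τ : Equiv.Perm (Fin N), c i * ∏ l, z l ^ E i (τ l) := by
              refine Finset.sum_congr rfl fun i _ => ?_
              rw [hMsrt i, Finset.mul_sum]
          _ = ∑ τ : Equiv.Perm (Fin N), ∑ i, c i * ∏ l, z l ^ E i (τ l) := Finset.sum_comm
          _ = ∑ _τ : Equiv.Perm (Fin N), f z := Finset.sum_congr rfl fun τ _ => hfz τ
          _ = (N.factorial : ℂ) * f z := by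
              rw [Finset.sum_const, Finset.card_univ, Fintype.card_perm, Fintype.card_fin,
                nsmul_eq_mul]
      rw [e2, ← mul_assoc, inv_mul_cancel₀ hNfac, one_mul]
    exact hchain.symm


section Etwo

variable {N : ℕ} (n : Fin N → ℕ) (σ : Equiv.Perm (Fin N)) (j k : Fin N) (t : ℕ)

/-- the modified exponent vector -/
def E2v : Fin N → ℕ := fun l =>
  if l = j then min (n (σ j)) (n (σ k)) + t
  else if l = k then max (n (σ j)) (n (σ k)) - t
  else n (σ l)

lemma deg2 (hjk : j ≠ k) (ht : t ≤ max (n (σ j)) (n (σ k)) - min (n (σ j)) (n (σ k))) :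
    ∑ l, E2v n σ j k t l = ∑ l, n l := by
  have hkej : k ∈ univ.erase j := mem_erase.mpr ⟨hjk.symm, mem_univ k⟩
  have hrest : ∑ l ∈ (univ.erase j).erase k, E2v n σ j k t l
      = ∑ l ∈ (univ.erase j).erase k, n (σ l) := by
    refine Finset.sum_congr rfl fun l hl => ?_
    have h1 := Finset.ne_of_mem_erase hl
    have h2 := Finset.ne_of_mem_erase (Finset.mem_of_mem_erase hl)
    simp [E2v, h1, h2]
  have e1 : ∑ l, E2v n σ j k t l = E2v n σ j k t j + (E2v n σ j k t k
      + ∑ l ∈ (univ.erase j).erase k, E2v n σ j k t l) := by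
    rw [← Finset.add_sum_erase univ _ (mem_univ j), ← Finset.add_sum_erase _ _ hkej]
  have e2 : ∑ l, n (σ l) = n (σ j) + (n (σ k) + ∑ l ∈ (univ.erase j).erase k, n (σ l)) := by
    rw [← Finset.add_sum_erase univ _ (mem_univ j), ← Finset.add_sum_erase _ _ hkej]
  have e3 : ∑ l, n (σ l) = ∑ l, n l := Equiv.sum_comp σ n
  rw [e1, hrest, ← e3, e2]
  have hEj : E2v n σ j k t j = min (n (σ j)) (n (σ k)) + t := by simp [E2v]
  have hEk : E2v n σ j k t k = max (n (σ j)) (n (σ k)) - t := by simp [E2v, hjk.symm]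
  rw [hEj, hEk]
  set r := ∑ l ∈ (univ.erase j).erase k, n (σ l)
  omega

lemma dom2 (hn : ∀ j k : Fin N, j ≤ k → n k ≤ n j) (hjk : j ≠ k)
    (ht : t ≤ max (n (σ j)) (n (σ k)) - min (n (σ j)) (n (σ k))) (S : Finset (Fin N)) :
    ∑ l ∈ S, E2v n σ j k t l ≤ ∑ l ∈ univ.filter (fun l : Fin N => (l : ℕ) < S.card), n l := by
  have hstep : ∃ S' : Finset (Fin N), S'.card = S.card
      ∧ ∑ l ∈ S, E2v n σ j k t l ≤ ∑ l ∈ S', n (σ l) := by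
    by_cases hj : j ∈ S <;> by_cases hk : k ∈ S
    · refine ⟨S, rfl, ?_⟩
      have hkej : k ∈ S.erase j := mem_erase.mpr ⟨hjk.symm, hk⟩
      rw [← Finset.add_sum_erase S _ hj, ← Finset.add_sum_erase _ _ hkej,
        ← Finset.add_sum_erase S (fun l => n (σ l)) hj,
        ← Finset.add_sum_erase _ (fun l => n (σ l)) hkej]
      have hrest : ∑ l ∈ (S.erase j).erase k, E2v n σ j k t l
          = ∑ l ∈ (S.erase j).erase k, n (σ l) := by
        refine Finset.sum_congr rfl fun l hl => ?_
        have h1 := Finset.ne_of_mem_erase hl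
        have h2 := Finset.ne_of_mem_erase (Finset.mem_of_mem_erase hl)
        simp [E2v, h1, h2]
      rw [hrest]
      have hEj : E2v n σ j k t j = min (n (σ j)) (n (σ k)) + t := by simp [E2v]
      have hEk : E2v n σ j k t k = max (n (σ j)) (n (σ k)) - t := by simp [E2v, hjk.symm]
      rw [hEj, hEk]
      set r := ∑ l ∈ (S.erase j).erase k, n (σ l)
      omega
    · -- j ∈ S, k ∉ S
      have hrest : ∑ l ∈ S.erase j, E2v n σ j k t l = ∑ l ∈ S.erase j, n (σ l) := by
        refine Finset.sum_congr rfl fun l hl => ?_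
        have h1 := Finset.ne_of_mem_erase hl
        have h2 : l ≠ k := fun h => hk (h ▸ Finset.mem_of_mem_erase hl)
        simp [E2v, h1, h2]
      have hEj : E2v n σ j k t j = min (n (σ j)) (n (σ k)) + t := by simp [E2v]
      rcases le_total (n (σ k)) (n (σ j)) with h | h
      · refine ⟨S, rfl, ?_⟩
        rw [← Finset.add_sum_erase S _ hj, ← Finset.add_sum_erase S (fun l => n (σ l)) hj,
          hrest, hEj]
        set r := ∑ l ∈ S.erase j, n (σ l)
        omega
      · have hknotin : k ∉ S.erase j := fun hc => hk (Finset.mem_of_mem_erase hc)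
        refine ⟨insert k (S.erase j), ?_, ?_⟩
        · rw [Finset.card_insert_of_notMem hknotin, Finset.card_erase_of_mem hj]
          have : 1 ≤ S.card := Finset.card_pos.mpr ⟨j, hj⟩
          omega
        · rw [Finset.sum_insert hknotin, ← Finset.add_sum_erase S _ hj, hrest, hEj]
          set r := ∑ l ∈ S.erase j, n (σ l)
          omega
    · -- j ∉ S, k ∈ S
      have hrest : ∑ l ∈ S.erase k, E2v n σ j k t l = ∑ l ∈ S.erase k, n (σ l) := by
        refine Finset.sum_congr rfl fun l hl => ?_
        have h1 := Finset.ne_of_mem_erase hl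
        have h2 : l ≠ j := fun h => hj (h ▸ Finset.mem_of_mem_erase hl)
        simp [E2v, h1, h2]
      have hEk : E2v n σ j k t k = max (n (σ j)) (n (σ k)) - t := by simp [E2v, hjk.symm]
      rcases le_total (n (σ j)) (n (σ k)) with h | h
      · refine ⟨S, rfl, ?_⟩
        rw [← Finset.add_sum_erase S _ hk, ← Finset.add_sum_erase S (fun l => n (σ l)) hk,
          hrest, hEk]
        set r := ∑ l ∈ S.erase k, n (σ l)
        omega
      · have hjnotin : j ∉ S.erase k := fun hc => hj (Finset.mem_of_mem_erase hc)
        refine ⟨insert j (S.erase k), ?_, ?_⟩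
        · rw [Finset.card_insert_of_notMem hjnotin, Finset.card_erase_of_mem hk]
          have : 1 ≤ S.card := Finset.card_pos.mpr ⟨k, hk⟩
          omega
        · rw [Finset.sum_insert hjnotin, ← Finset.add_sum_erase S _ hk, hrest, hEk]
          set r := ∑ l ∈ S.erase k, n (σ l)
          omega
    · refine ⟨S, rfl, le_of_eq ?_⟩
      refine Finset.sum_congr rfl fun l hl => ?_
      have h1 : l ≠ j := fun h => hj (h ▸ hl)
      have h2 : l ≠ k := fun h => hk (h ▸ hl)
      simp [E2v, h1, h2]
  obtain ⟨S', hcard, hle⟩ := hstep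
  refine hle.trans ?_
  have hinj : ∀ x ∈ S', ∀ y ∈ S', σ x = σ y → x = y := fun x _ y _ h => σ.injective h
  have := part_sum n hn (S'.image σ)
  rw [Finset.sum_image hinj, Finset.card_image_of_injective _ σ.injective, hcard] at this
  exact this

lemma dom1 (hn : ∀ j k : Fin N, j ≤ k → n k ≤ n j) (S : Finset (Fin N)) :
    ∑ l ∈ S, n (σ l) ≤ ∑ l ∈ univ.filter (fun l : Fin N => (l : ℕ) < S.card), n l := by
  have hinj : ∀ x ∈ S, ∀ y ∈ S, σ x = σ y → x = y := fun x _ y _ h => σ.injective h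
  have := part_sum n hn (S.image σ)
  rw [Finset.sum_image hinj, Finset.card_image_of_injective _ σ.injective] at this
  exact this

end Etwo


lemma ml2 (p q : ℕ) (x y u C : ℂ) :
    x ^ 2 / u * ((p : ℂ) * x ^ (p - 1) * (y ^ q * C))
      = (p : ℂ) * x ^ (p + 1) * y ^ q / u * C := by
  match p with
  | 0 => simp
  | (p'+1) =>
    simp only [Nat.add_sub_cancel, div_eq_mul_inv]
    push_cast
    ring

section Part2

variable {N : ℕ} (n : Fin N → ℕ) (z : Fin N → ℂ)

noncomputable def Rp (σ : Equiv.Perm (Fin N)) (j k : Fin N) : ℂ :=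
  ∏ l ∈ (univ.erase j).erase k, z l ^ n (σ l)

noncomputable def t1 (σ : Equiv.Perm (Fin N)) (j k : Fin N) : ℂ :=
  if j = k then 0 else
    (n (σ j) : ℂ) * z j ^ (n (σ j) + 1) * z k ^ (n (σ k)) / (z j - z k) * Rp n z σ j k

lemma t1_diag (σ : Equiv.Perm (Fin N)) (j : Fin N) : t1 n z σ j j = 0 := if_pos rfl

lemma t1_of_ne (σ : Equiv.Perm (Fin N)) {j k : Fin N} (h : j ≠ k) :
    t1 n z σ j k
      = (n (σ j) : ℂ) * z j ^ (n (σ j) + 1) * z k ^ (n (σ k)) / (z j - z k) * Rp n z σ j k :=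
  if_neg h

noncomputable def quad (σ : Equiv.Perm (Fin N)) (j k : Fin N) : ℂ :=
  t1 n z σ j k + t1 n z σ k j + t1 n z (σ * Equiv.swap j k) j k
    + t1 n z (σ * Equiv.swap j k) k j

lemma stepA : ∑ j, ∑ k, (if j ≠ k then (z j ^ 2 / (z j - z k)) * pdf (Mf n) j z else 0)
    = ∑ j, ∑ k, ∑ σ : Equiv.Perm (Fin N), t1 n z σ j k := by
  refine Finset.sum_congr rfl fun j _ => Finset.sum_congr rfl fun k _ => ?_
  by_cases h : j = k
  · subst h
    simp only [ne_eq, not_true_eq_false, if_false, t1_diag, Finset.sum_const_zero]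
  · rw [if_pos h, pd_M, Finset.mul_sum]
    refine Finset.sum_congr rfl fun σ _ => ?_
    rw [t1_of_ne n z σ h]
    have hk : k ∈ univ.erase j := mem_erase.mpr ⟨Ne.symm h, mem_univ k⟩
    rw [← Finset.mul_prod_erase _ (fun l => z l ^ n (σ l)) hk]
    exact ml2 (n (σ j)) (n (σ k)) (z j) (z k) (z j - z k) (Rp n z σ j k)

lemma stepB : ∑ j, ∑ k, ∑ σ : Equiv.Perm (Fin N), t1 n z σ j k
    = (1/4 : ℂ) * ∑ j, ∑ k, ∑ σ : Equiv.Perm (Fin N), quad n z σ j k := by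
  have h2 : ∀ j k : Fin N, ∑ σ : Equiv.Perm (Fin N), t1 n z (σ * Equiv.swap j k) j k
      = ∑ σ : Equiv.Perm (Fin N), t1 n z σ j k := fun j k =>
    Equiv.sum_comp (Equiv.mulRight (Equiv.swap j k)) (fun σ => t1 n z σ j k)
  have h3 : ∀ j k : Fin N, ∑ σ : Equiv.Perm (Fin N), t1 n z (σ * Equiv.swap j k) k j
      = ∑ σ : Equiv.Perm (Fin N), t1 n z σ k j := fun j k =>
    Equiv.sum_comp (Equiv.mulRight (Equiv.swap j k)) (fun σ => t1 n z σ k j)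
  have expand : ∑ j, ∑ k, ∑ σ : Equiv.Perm (Fin N), quad n z σ j k
      = (∑ j, ∑ k, ∑ σ : Equiv.Perm (Fin N), t1 n z σ j k)
        + (∑ j, ∑ k, ∑ σ : Equiv.Perm (Fin N), t1 n z σ k j)
        + (∑ j, ∑ k, ∑ σ : Equiv.Perm (Fin N), t1 n z (σ * Equiv.swap j k) j k)
        + (∑ j, ∑ k, ∑ σ : Equiv.Perm (Fin N), t1 n z (σ * Equiv.swap j k) k j) := by
    simp only [quad, Finset.sum_add_distrib]
  have h4 : ∑ j, ∑ k, ∑ σ : Equiv.Perm (Fin N), t1 n z σ k j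
      = ∑ j, ∑ k, ∑ σ : Equiv.Perm (Fin N), t1 n z σ j k := Finset.sum_comm
  rw [expand,
    Finset.sum_congr rfl fun j _ => Finset.sum_congr rfl fun k _ => h2 j k,
    Finset.sum_congr rfl fun j _ => Finset.sum_congr rfl fun k _ => h3 j k, h4]
  ring

lemma stepC (hz : Function.Injective z) (σ : Equiv.Perm (Fin N)) {j k : Fin N} (hjk : j ≠ k) :
    quad n z σ j k
      = (∑ t ∈ range (max (n (σ j)) (n (σ k)) - min (n (σ j)) (n (σ k)) + 1),
          kap (n (σ j)) (n (σ k)) t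
            * (z j ^ (min (n (σ j)) (n (σ k)) + t) * z k ^ (max (n (σ j)) (n (σ k)) - t)))
          * Rp n z σ j k := by
  have hzz : z j ≠ z k := fun h => hjk (hz h)
  have hR1 : Rp n z σ k j = Rp n z σ j k := by
    unfold Rp; rw [Finset.erase_right_comm]
  have hRR : ∀ l, l ≠ j → l ≠ k → (σ * Equiv.swap j k) l = σ l := fun l h1 h2 => by
    rw [Equiv.Perm.mul_apply, Equiv.swap_apply_of_ne_of_ne h1 h2]
  have hR2 : Rp n z (σ * Equiv.swap j k) j k = Rp n z σ j k := by
    unfold Rp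
    refine Finset.prod_congr rfl fun l hl => ?_
    rw [hRR l (Finset.ne_of_mem_erase (Finset.mem_of_mem_erase hl)) (Finset.ne_of_mem_erase hl)]
  have hR3 : Rp n z (σ * Equiv.swap j k) k j = Rp n z σ j k := by
    unfold Rp
    rw [Finset.erase_right_comm]
    refine Finset.prod_congr rfl fun l hl => ?_
    rw [hRR l (Finset.ne_of_mem_erase (Finset.mem_of_mem_erase hl)) (Finset.ne_of_mem_erase hl)]
  have hab : n ((σ * Equiv.swap j k) j) = n (σ k) := by
    rw [Equiv.Perm.mul_apply, Equiv.swap_apply_left]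
  have hba : n ((σ * Equiv.swap j k) k) = n (σ j) := by
    rw [Equiv.Perm.mul_apply, Equiv.swap_apply_right]
  have hi := ident (n (σ j)) (n (σ k)) (z j) (z k) hzz
  calc quad n z σ j k
      = ((n (σ j) : ℂ) * z j ^ (n (σ j)+1) * z k ^ (n (σ k)) / (z j - z k)
          + (n (σ k) : ℂ) * z k ^ (n (σ k)+1) * z j ^ (n (σ j)) / (z k - z j)
          + (n (σ k) : ℂ) * z j ^ (n (σ k)+1) * z k ^ (n (σ j)) / (z j - z k)
          + (n (σ j) : ℂ) * z k ^ (n (σ j)+1) * z j ^ (n (σ k)) / (z k - z j))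
        * Rp n z σ j k := by
        unfold quad
        rw [t1_of_ne n z σ hjk, t1_of_ne n z σ (Ne.symm hjk), t1_of_ne n z _ hjk,
          t1_of_ne n z _ (Ne.symm hjk), hR1, hR2, hR3, hab, hba]
        ring
    _ = _ := by rw [hi]

end Part2

def BB {N : ℕ} (n : Fin N → ℕ) : ℕ := (∑ j, n j) + 1

noncomputable def cf {N : ℕ} (n : Fin N → ℕ) (lam : ℝ) :
    (Equiv.Perm (Fin N) ⊕ (Equiv.Perm (Fin N) × Fin N × Fin N × Fin (BB n))) → ℂ :=
  Sum.elim
    (fun σ => (1 / (2 * (lam : ℂ))) * ∑ j, (n (σ j) : ℂ) * ((n (σ j) - 1 : ℕ) : ℂ))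
    (fun x => if x.2.1 ≠ x.2.2.1 ∧ (x.2.2.2 : ℕ)
          ≤ max (n (x.1 x.2.1)) (n (x.1 x.2.2.1)) - min (n (x.1 x.2.1)) (n (x.1 x.2.2.1))
      then (1/4 : ℂ) * kap (n (x.1 x.2.1)) (n (x.1 x.2.2.1)) (x.2.2.2 : ℕ) else 0)

noncomputable def Ef {N : ℕ} (n : Fin N → ℕ) :
    (Equiv.Perm (Fin N) ⊕ (Equiv.Perm (Fin N) × Fin N × Fin N × Fin (BB n))) → Fin N → ℕ :=
  Sum.elim
    (fun σ => fun l => n (σ l))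
    (fun x => if x.2.1 ≠ x.2.2.1 ∧ (x.2.2.2 : ℕ)
          ≤ max (n (x.1 x.2.1)) (n (x.1 x.2.2.1)) - min (n (x.1 x.2.1)) (n (x.1 x.2.2.1))
      then E2v n x.1 x.2.1 x.2.2.1 (x.2.2.2 : ℕ) else fun l => n (x.1 l))

section StepD

variable {N : ℕ} (n : Fin N → ℕ) (z : Fin N → ℂ) (lam : ℝ)

lemma stepD (hz : Function.Injective z) (σ : Equiv.Perm (Fin N)) (j k : Fin N) :
    ∑ t : Fin (BB n), cf n lam (Sum.inr (σ, j, k, t)) * ∏ l, z l ^ Ef n (Sum.inr (σ, j, k, t)) l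
      = (1/4 : ℂ) * quad n z σ j k := by
  by_cases hjk : j = k
  · subst hjk
    simp [cf, quad, t1_diag]
  · rw [stepC n z hz σ hjk]
    have h1 : n (σ j) ≤ ∑ l, n l :=
      Finset.single_le_sum (fun i _ => Nat.zero_le (n i)) (mem_univ (σ j))
    have h2 : n (σ k) ≤ ∑ l, n l :=
      Finset.single_le_sum (fun i _ => Nat.zero_le (n i)) (mem_univ (σ k))
    have hBB : max (n (σ j)) (n (σ k)) - min (n (σ j)) (n (σ k)) + 1 ≤ BB n := by
      unfold BB; omega
    set D := max (n (σ j)) (n (σ k)) - min (n (σ j)) (n (σ k)) with hD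
    set g : ℕ → ℂ := fun t => if t ≤ D then (1/4 : ℂ) * kap (n (σ j)) (n (σ k)) t
      * (z j ^ (min (n (σ j)) (n (σ k)) + t) * (z k ^ (max (n (σ j)) (n (σ k)) - t)
          * Rp n z σ j k)) else 0 with hg
    have claim1 : ∀ t : Fin (BB n),
        cf n lam (Sum.inr (σ, j, k, t)) * ∏ l, z l ^ Ef n (Sum.inr (σ, j, k, t)) l
          = g (t : ℕ) := by
      intro t
      by_cases ht : (t : ℕ) ≤ D
      · have hcond : (j ≠ k ∧ (t : ℕ) ≤ D) := ⟨hjk, ht⟩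
        have hcf : cf n lam (Sum.inr (σ, j, k, t))
            = (1/4 : ℂ) * kap (n (σ j)) (n (σ k)) (t : ℕ) := by
          simp only [cf, Sum.elim_inr]
          exact if_pos hcond
        have hEf : Ef n (Sum.inr (σ, j, k, t)) = E2v n σ j k (t : ℕ) := by
          simp only [Ef, Sum.elim_inr]
          exact if_pos hcond
        have hkej : k ∈ univ.erase j := mem_erase.mpr ⟨Ne.symm hjk, mem_univ k⟩
        have hprod : ∏ l, z l ^ E2v n σ j k (t : ℕ) l
            = z j ^ (min (n (σ j)) (n (σ k)) + (t : ℕ))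
              * (z k ^ (max (n (σ j)) (n (σ k)) - (t : ℕ)) * Rp n z σ j k) := by
          rw [← Finset.mul_prod_erase univ _ (mem_univ j), ← Finset.mul_prod_erase _ _ hkej]
          have e1 : E2v n σ j k (t : ℕ) j = min (n (σ j)) (n (σ k)) + (t : ℕ) := by
            simp [E2v]
          have e2 : E2v n σ j k (t : ℕ) k = max (n (σ j)) (n (σ k)) - (t : ℕ) := by
            simp [E2v, Ne.symm hjk]
          rw [e1, e2]
          congr 2
          refine Finset.prod_congr rfl fun l hl => ?_
          have hl1 := Finset.ne_of_mem_erase hl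
          have hl2 := Finset.ne_of_mem_erase (Finset.mem_of_mem_erase hl)
          simp [E2v, hl1, hl2]
        rw [hcf, hEf, hprod]
        simp only [hg]
        rw [if_pos ht]
      · have hcond : ¬(j ≠ k ∧ (t : ℕ) ≤ D) := fun hc => ht hc.2
        have hcf : cf n lam (Sum.inr (σ, j, k, t)) = 0 := by
          simp only [cf, Sum.elim_inr]
          exact if_neg hcond
        rw [hcf, zero_mul]
        simp only [hg]
        rw [if_neg ht]
    rw [Finset.sum_congr rfl fun t _ => claim1 t]
    rw [Fin.sum_univ_eq_sum_range g (BB n)]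
    rw [← Finset.sum_subset (Finset.range_subset_range.mpr hBB)
      (fun t _ ht => by simp only [hg]; exact if_neg (fun hle => ht (mem_range.mpr (by omega))))]
    rw [Finset.sum_mul, Finset.mul_sum]
    refine Finset.sum_congr rfl fun t ht => ?_
    rw [mem_range, Nat.lt_succ_iff] at ht
    simp only [hg]
    rw [if_pos ht]
    ring

end StepD

lemma core {N : ℕ} (n : Fin N → ℕ) (lam : ℝ) (z : Fin N → ℂ) (hz : Function.Injective z) :
    (1 / (2 * (lam : ℂ))) * (∑ j, z j ^ 2 * pdf (pdf (Mf n) j) j z)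
      + ∑ j, ∑ k, (if j ≠ k then (z j ^ 2 / (z j - z k)) * pdf (Mf n) j z else 0)
    = ∑ i : Equiv.Perm (Fin N) ⊕ (Equiv.Perm (Fin N) × Fin N × Fin N × Fin (BB n)),
        cf n lam i * ∏ l, z l ^ Ef n i l := by
  rw [Fintype.sum_sum_type]
  congr 1
  · rw [part1, Finset.mul_sum]
    refine Finset.sum_congr rfl fun σ _ => ?_
    simp only [cf, Ef, Sum.elim_inl]
    ring
  · rw [stepA, stepB n z]
    have hD : ∀ (j k : Fin N) (σ : Equiv.Perm (Fin N)), (1/4 : ℂ) * quad n z σ j k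
        = ∑ t : Fin (BB n), cf n lam (Sum.inr (σ, j, k, t))
            * ∏ l, z l ^ Ef n (Sum.inr (σ, j, k, t)) l :=
      fun j k σ => (stepD n z lam hz σ j k).symm
    rw [Finset.mul_sum]
    calc ∑ j, (1/4 : ℂ) * ∑ k, ∑ σ : Equiv.Perm (Fin N), quad n z σ j k
        = ∑ j, ∑ k, ∑ σ : Equiv.Perm (Fin N), ∑ t : Fin (BB n),
            cf n lam (Sum.inr (σ, j, k, t)) * ∏ l, z l ^ Ef n (Sum.inr (σ, j, k, t)) l := by
          refine Finset.sum_congr rfl fun j _ => ?_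
          rw [Finset.mul_sum]
          refine Finset.sum_congr rfl fun k _ => ?_
          rw [Finset.mul_sum]
          exact Finset.sum_congr rfl fun σ _ => hD j k σ
      _ = ∑ j, ∑ σ : Equiv.Perm (Fin N), ∑ k, ∑ t : Fin (BB n),
            cf n lam (Sum.inr (σ, j, k, t)) * ∏ l, z l ^ Ef n (Sum.inr (σ, j, k, t)) l :=
          Finset.sum_congr rfl fun j _ => Finset.sum_comm
      _ = ∑ σ : Equiv.Perm (Fin N), ∑ j, ∑ k, ∑ t : Fin (BB n),
            cf n lam (Sum.inr (σ, j, k, t)) * ∏ l, z l ^ Ef n (Sum.inr (σ, j, k, t)) l :=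
          Finset.sum_comm
      _ = ∑ x : Equiv.Perm (Fin N) × Fin N × Fin N × Fin (BB n),
            cf n lam (Sum.inr x) * ∏ l, z l ^ Ef n (Sum.inr x) l := by
          rw [Fintype.sum_prod_type]
          refine Finset.sum_congr rfl fun σ _ => ?_
          rw [Fintype.sum_prod_type]
          refine Finset.sum_congr rfl fun j _ => ?_
          rw [Fintype.sum_prod_type]

lemma hdegEf {N : ℕ} (n : Fin N → ℕ) :
    ∀ i, ∑ j, Ef n i j = ∑ j, n j := by
  rintro (σ | ⟨σ, j, k, t⟩)
  · simp only [Ef, Sum.elim_inl]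
    exact Equiv.sum_comp σ n
  · simp only [Ef, Sum.elim_inr]
    split_ifs with h
    · exact deg2 n σ j k (t : ℕ) h.1 h.2
    · exact Equiv.sum_comp σ n

lemma hdomEf {N : ℕ} (n : Fin N → ℕ) (hn : ∀ j k : Fin N, j ≤ k → n k ≤ n j) :
    ∀ i (S : Finset (Fin N)),
      ∑ k ∈ S, Ef n i k ≤ ∑ k ∈ univ.filter (fun k : Fin N => (k : ℕ) < S.card), n k := by
  rintro (σ | ⟨σ, j, k, t⟩) S
  · exact dom1 n σ hn S
  · simp only [Ef, Sum.elim_inr]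
    split_ifs with h
    · exact dom2 n σ j k (t : ℕ) hn h.1 h.2 S
    · exact dom1 n σ hn S

lemma hsymEf {N : ℕ} (n : Fin N → ℕ) (lam : ℝ) :
    ∀ τ : Equiv.Perm (Fin N),
      ∃ Φ : (Equiv.Perm (Fin N) ⊕ (Equiv.Perm (Fin N) × Fin N × Fin N × Fin (BB n)))
          ≃ (Equiv.Perm (Fin N) ⊕ (Equiv.Perm (Fin N) × Fin N × Fin N × Fin (BB n))),
        ∀ i, cf n lam (Φ i) = cf n lam i ∧ Ef n (Φ i) = fun l => Ef n i (τ l) := by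
  intro τ
  refine ⟨Equiv.sumCongr (Equiv.mulRight τ)
    ((Equiv.mulRight τ).prodCongr ((τ.symm : Fin N ≃ Fin N).prodCongr
      ((τ.symm : Fin N ≃ Fin N).prodCongr (Equiv.refl (Fin (BB n)))))), ?_⟩
  have hmul : ∀ (σ : Equiv.Perm (Fin N)) (l : Fin N), (σ * τ) l = σ (τ l) := fun σ l => rfl
  rintro (σ | ⟨σ, j, k, t⟩)
  · constructor
    · simp only [Equiv.sumCongr_apply, Sum.map_inl, cf, Sum.elim_inl, Equiv.coe_mulRight]
      congr 1
      rw [← Equiv.sum_comp τ (fun jj => (n (σ jj) : ℂ) * ((n (σ jj) - 1 : ℕ) : ℂ))]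
      rfl
    · funext l
      simp only [Equiv.sumCongr_apply, Sum.map_inl, Ef, Sum.elim_inl, Equiv.coe_mulRight]
      rfl
  · have hΦ : (Equiv.sumCongr (Equiv.mulRight τ)
        ((Equiv.mulRight τ).prodCongr ((τ.symm : Fin N ≃ Fin N).prodCongr
          ((τ.symm : Fin N ≃ Fin N).prodCongr (Equiv.refl (Fin (BB n)))))))
        (Sum.inr (σ, j, k, t)) = Sum.inr (σ * τ, τ.symm j, τ.symm k, t) := rfl
    rw [hΦ]
    have ha : n ((σ * τ) (τ.symm j)) = n (σ j) := by
      rw [hmul, Equiv.apply_symm_apply]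
    have hb : n ((σ * τ) (τ.symm k)) = n (σ k) := by
      rw [hmul, Equiv.apply_symm_apply]
    have hcond : (τ.symm j ≠ τ.symm k) = (j ≠ k) := by
      simp [ne_eq, EmbeddingLike.apply_eq_iff_eq]
    constructor
    · simp only [cf, Sum.elim_inr, Equiv.Perm.mul_apply, Equiv.apply_symm_apply, ne_eq,
        EmbeddingLike.apply_eq_iff_eq]
    · funext l
      show (if τ.symm j ≠ τ.symm k ∧ (t : ℕ) ≤ max (n ((σ * τ) (τ.symm j))) (n ((σ * τ) (τ.symm k)))
          - min (n ((σ * τ) (τ.symm j))) (n ((σ * τ) (τ.symm k)))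
        then E2v n (σ * τ) (τ.symm j) (τ.symm k) (t : ℕ) else fun l => n ((σ * τ) l)) l
        = (if j ≠ k ∧ (t : ℕ) ≤ max (n (σ j)) (n (σ k)) - min (n (σ j)) (n (σ k))
        then E2v n σ j k (t : ℕ) else fun l => n (σ l)) (τ l)
      have hiff : (τ.symm j ≠ τ.symm k ∧ (t : ℕ) ≤ max (n ((σ * τ) (τ.symm j)))
          (n ((σ * τ) (τ.symm k))) - min (n ((σ * τ) (τ.symm j))) (n ((σ * τ) (τ.symm k))))
          ↔ (j ≠ k ∧ (t : ℕ) ≤ max (n (σ j)) (n (σ k)) - min (n (σ j)) (n (σ k))) := by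
        rw [ha, hb, hcond]
      by_cases hc : j ≠ k ∧ (t : ℕ) ≤ max (n (σ j)) (n (σ k)) - min (n (σ j)) (n (σ k))
      · rw [if_pos (hiff.mpr hc), if_pos hc]
        simp only [E2v, Equiv.Perm.mul_apply, Equiv.apply_symm_apply, Equiv.eq_symm_apply]
      · rw [if_neg (mt hiff.mp hc), if_neg hc]
        rfl

theorem aux {N : ℕ} (hN : 2 ≤ N) (lam : ℝ) (hlam : 0 < lam) (n : Fin N → ℕ)
    (hn : ∀ j k : Fin N, j ≤ k → n k ≤ n j) :
    ∃ b : (Fin N → ℕ) → ℂ,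
      (Function.support b).Finite ∧
      (∀ m, b m ≠ 0 → (∀ j k : Fin N, j ≤ k → m k ≤ m j) ∧ (∑ j, m j = ∑ j, n j) ∧
        (∀ j : Fin N, (∑ k ∈ univ.filter (fun k => k ≤ j), m k)
            ≤ ∑ k ∈ univ.filter (fun k => k ≤ j), n k)) ∧
      ∀ z : Fin N → ℂ, Function.Injective z →
        (1 / (2 * (lam : ℂ))) * (∑ j, z j ^ 2 * pdf (pdf (Mf n) j) j z)
          + ∑ j, ∑ k, (if j ≠ k then (z j ^ 2 / (z j - z k)) * pdf (Mf n) j z else 0)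
        = ∑ᶠ m, b m * Mf m z :=
  SYM n _ (cf n lam) (Ef n) (hdegEf n) (hdomEf n hn) (hsymEf n lam) _
    (fun z hz => core n lam z hz)

end CS11


/-- Triangularity of `D` on the monomial symmetric functions: for every partition `n`,
`D M_n = ∑_{m ≤ n} b_{n,m} M_m` for some finitely supported coefficients `b`, where
`M_m(z) = ∑_{σ ∈ S_N} ∏_j z_j^{m_{σ(j)}}` and `m ≤ n` is the dominance order. -/
theorem stmt_11 (N : ℕ) (hN : 2 ≤ N) (lam : ℝ) (hlam : 0 < lam)
    (n : Fin N → ℕ) (hn : ∀ j k : Fin N, j ≤ k → n k ≤ n j) :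
    let M : (Fin N → ℕ) → (Fin N → ℂ) → ℂ := fun m w =>
      ∑ σ : Equiv.Perm (Fin N), ∏ j : Fin N, w j ^ (m (σ j))
    let pd : ((Fin N → ℂ) → ℂ) → Fin N → (Fin N → ℂ) → ℂ :=
      fun g j w => deriv (fun s => g (Function.update w j s)) (w j)
    let D : ((Fin N → ℂ) → ℂ) → (Fin N → ℂ) → ℂ := fun g w =>
      (1 / (2 * (lam : ℂ))) * (∑ j : Fin N, (w j) ^ 2 * pd (pd g j) j w)
        + ∑ j : Fin N, ∑ k : Fin N,
            if j ≠ k then ((w j) ^ 2 / (w j - w k)) * pd g j w else 0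
    ∃ b : (Fin N → ℕ) → ℂ,
      (Function.support b).Finite ∧
      (∀ m : Fin N → ℕ, b m ≠ 0 →
        (∀ j k : Fin N, j ≤ k → m k ≤ m j) ∧
        (∑ j : Fin N, m j = ∑ j : Fin N, n j) ∧
        (∀ j : Fin N, (∑ k ∈ Finset.univ.filter (fun k => k ≤ j), m k)
            ≤ ∑ k ∈ Finset.univ.filter (fun k => k ≤ j), n k)) ∧
      ∀ z : Fin N → ℂ, Function.Injective z →
        D (M n) z = ∑ᶠ m : Fin N → ℕ, b m * M m z := by
  intro M pd D
  exact CS11.aux hN lam hlam n hn
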